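/- There do not exist real numbers γ, θ, τ satisfying simultaneously: sin θ · cos τ − sin γ · sin τ = 0, cos γ · sin τ = 0, cos θ · cos τ = 0, and sin γ · cos τ + sin θ · sin τ = 0. Consequently, (0,0) is a regular value of the map Φ₀ : ℝ⁴ → ℝ², Φ₀(γ, θ, τ, ν) = (sin θ cos τ − sin γ sin τ, ν): at every zero of Φ₀ the derivative of Φ₀ is surjective. (The regular-value step in Corollary 3.3 of the paper, showing V₀ = Φ₀⁻¹(0,0) is a smooth surface.) -/

import Mathlib

open Real

/-- The regular-value step in Corollary 3.3 of the paper.  There are no real numbers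
`γ, θ, τ` with `sin θ cos τ − sin γ sin τ = 0`, `cos γ sin τ = 0`, `cos θ cos τ = 0`, and
`sin γ cos τ + sin θ sin τ = 0`; consequently `(0,0)` is a regular value of
`Φ₀(γ, θ, τ, ν) = (sin θ cos τ − sin γ sin τ, ν)`: at every zero of `Φ₀` the derivative of
`Φ₀` is surjective. -/
theorem regular_value_zero_of_Phi0 :
    (¬ ∃ γ θ τ : ℝ,
        sin θ * cos τ - sin γ * sin τ = 0 ∧
        cos γ * sin τ = 0 ∧
        cos θ * cos τ = 0 ∧
        sin γ * cos τ + sin θ * sin τ = 0) ∧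
    (∀ x : ℝ × ℝ × ℝ × ℝ,
        (fun x : ℝ × ℝ × ℝ × ℝ =>
            ((sin x.2.1 * cos x.2.2.1 - sin x.1 * sin x.2.2.1, x.2.2.2) : ℝ × ℝ)) x = (0, 0) →
        Function.Surjective
          (fderiv ℝ (fun x : ℝ × ℝ × ℝ × ℝ =>
            ((sin x.2.1 * cos x.2.2.1 - sin x.1 * sin x.2.2.1, x.2.2.2) : ℝ × ℝ)) x)) := by
  have key : ¬ ∃ γ θ τ : ℝ,
      sin θ * cos τ - sin γ * sin τ = 0 ∧
      cos γ * sin τ = 0 ∧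
      cos θ * cos τ = 0 ∧
      sin γ * cos τ + sin θ * sin τ = 0 := by
    rintro ⟨γ, θ, τ, h1, h2, h3, h4⟩
    have pyth := sin_sq_add_cos_sq τ
    have hsθ : sin θ = 0 := by
      linear_combination cos τ * h1 + sin τ * h4 - sin θ * pyth
    have hsγ : sin γ = 0 := by
      linear_combination cos τ * h4 - sin τ * h1 - sin γ * pyth
    have hγ' : cos γ ^ 2 = 1 := by
      have h := sin_sq_add_cos_sq γ; nlinarith [hsγ]
    have hθ' : cos θ ^ 2 = 1 := by
      have h := sin_sq_add_cos_sq θ; nlinarith [hsθ]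
    have hsτ : sin τ = 0 := by
      linear_combination cos γ * h2 - sin τ * hγ'
    have hcτ : cos τ = 0 := by
      linear_combination cos θ * h3 - cos τ * hθ'
    rw [hsτ, hcτ] at pyth
    norm_num at pyth
  refine ⟨key, ?_⟩
  rintro ⟨γ, θ, τ, ν⟩ hx
  simp only [Prod.mk.injEq] at hx
  obtain ⟨h1, hν⟩ := hx
  have hp1 : HasFDerivAt (fun x : ℝ × ℝ × ℝ × ℝ => x.1)
      (ContinuousLinearMap.fst ℝ ℝ (ℝ × ℝ × ℝ)) (γ, θ, τ, ν) := hasFDerivAt_fst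
  have hp2 := (hasFDerivAt_snd (𝕜 := ℝ) (p := ((γ, θ, τ, ν) : ℝ × ℝ × ℝ × ℝ))).fst
  have hp3 := (hasFDerivAt_snd (𝕜 := ℝ) (p := ((γ, θ, τ, ν) : ℝ × ℝ × ℝ × ℝ))).snd.fst
  have hp4 := (hasFDerivAt_snd (𝕜 := ℝ) (p := ((γ, θ, τ, ν) : ℝ × ℝ × ℝ × ℝ))).snd.snd
  have hg := (hp2.sin.mul hp3.cos).sub (hp1.sin.mul hp3.sin)
  have hf : HasFDerivAt (fun x : ℝ × ℝ × ℝ × ℝ =>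
      ((sin x.2.1 * cos x.2.2.1 - sin x.1 * sin x.2.2.1, x.2.2.2) : ℝ × ℝ)) _ (γ, θ, τ, ν) :=
    HasFDerivAt.prodMk hg hp4
  rw [hf.fderiv]
  -- at least one partial of the first component is nonzero
  have htri : cos γ * sin τ ≠ 0 ∨ cos θ * cos τ ≠ 0 ∨
      sin γ * cos τ + sin θ * sin τ ≠ 0 := by
    by_contra h
    push_neg at h
    exact key ⟨γ, θ, τ, h1, h.1, h.2.1, h.2.2⟩
  rintro ⟨a, b⟩
  rcases htri with hc | hc | hc
  · refine ⟨(-a / (cos γ * sin τ), 0, 0, b), ?_⟩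
    simp only [ContinuousLinearMap.prod_apply, ContinuousLinearMap.add_apply,
      ContinuousLinearMap.sub_apply, ContinuousLinearMap.smul_apply,
      ContinuousLinearMap.coe_comp', Function.comp_apply,
      ContinuousLinearMap.coe_fst', ContinuousLinearMap.coe_snd',
      smul_eq_mul, Prod.mk.injEq]
    constructor
    · field_simp
      field_simp [(mul_ne_zero_iff.mp hc).1, (mul_ne_zero_iff.mp hc).2]
      ring
    · trivial
  · refine ⟨(0, a / (cos θ * cos τ), 0, b), ?_⟩
    simp only [ContinuousLinearMap.prod_apply, ContinuousLinearMap.add_apply,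
      ContinuousLinearMap.sub_apply, ContinuousLinearMap.smul_apply,
      ContinuousLinearMap.coe_comp', Function.comp_apply,
      ContinuousLinearMap.coe_fst', ContinuousLinearMap.coe_snd',
      smul_eq_mul, Prod.mk.injEq]
    constructor
    · field_simp
      field_simp [(mul_ne_zero_iff.mp hc).1, (mul_ne_zero_iff.mp hc).2]
      ring
    · trivial
  · refine ⟨(0, 0, -a / (sin γ * cos τ + sin θ * sin τ), b), ?_⟩
    simp only [ContinuousLinearMap.prod_apply, ContinuousLinearMap.add_apply,
      ContinuousLinearMap.sub_apply, ContinuousLinearMap.smul_apply,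
      ContinuousLinearMap.coe_comp', Function.comp_apply,
      ContinuousLinearMap.coe_fst', ContinuousLinearMap.coe_snd',
      smul_eq_mul, Prod.mk.injEq]
    constructor
    · field_simp
      ring
    · trivial
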